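/- Let G be a minimal counterexample (with respect to number of vertices) among connected 3-chromatic graphs other than C_7 that admit no proper 3-coloring in which every vertex begins a colorful path. Then G contains no pair of twins, i.e., no two distinct vertices x, y with N_G(x) = N_G(y). -/

import Mathlib

/-- The cycle graph on `ZMod n` (for `n ≥ 3` this is the cycle `C_n`). -/
def cycleG (n : ℕ) : SimpleGraph (ZMod n) where
  Adj i j := i ≠ j ∧ (i = j + 1 ∨ j = i + 1)
  symm := ⟨fun i j ⟨h1, h2⟩ => ⟨h1.symm, h2.symm⟩⟩
  loopless := ⟨fun i ⟨h, _⟩ => h rfl⟩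

def GoodColoring {W : Type} (H : SimpleGraph W) : Prop :=
  ∃ c : W → Fin 3,
    (∀ u w, H.Adj u w → c u ≠ c w) ∧
    ∀ v : W, ∃ (y : W) (p : H.Walk v y),
      p.support.length = 3 ∧ (p.support.map c).Nodup

def C7TAdj : (ZMod 7 ⊕ Unit) → (ZMod 7 ⊕ Unit) → Bool := fun p q =>
  match p, q with
  | .inl i, .inl j => decide (i ≠ j ∧ (i = j + 1 ∨ j = i + 1))
  | .inl i, .inr _ => decide (i = 1 ∨ i = 6)
  | .inr _, .inl j => decide (j = 1 ∨ j = 6)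
  | .inr _, .inr _ => false

def C7T : SimpleGraph (ZMod 7 ⊕ Unit) where
  Adj p q := C7TAdj p q = true
  symm := by
    have : ∀ p q, C7TAdj p q = true → C7TAdj q p = true := by decide
    exact ⟨fun p q h => this p q h⟩
  loopless := by
    have : ∀ p, ¬ (C7TAdj p p = true) := by decide
    exact ⟨fun p h => this p h⟩

lemma C7T_adj_iff (p q : ZMod 7 ⊕ Unit) : C7T.Adj p q ↔ C7TAdj p q = true := Iff.rfl

lemma startPath {W : Type} {H : SimpleGraph W} (c : W → Fin 3) {v : W} (a b : W)
    (h1 : H.Adj v a) (h2 : H.Adj a b) (h3 : c v ≠ c a) (h4 : c v ≠ c b) (h5 : c a ≠ c b) :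
    ∃ (z : W) (p : H.Walk v z), p.support.length = 3 ∧ (p.support.map c).Nodup :=
  ⟨b, .cons h1 (.cons h2 .nil), rfl, by simp [h3, h4, h5]⟩

def cC : ZMod 7 ⊕ Unit → Fin 3 := fun p =>
  match p with
  | .inl i => ![0, 1, 2, 0, 2, 0, 1] i
  | .inr _ => 2

def fC : ZMod 7 ⊕ Unit → ZMod 7 ⊕ Unit := fun p =>
  match p with
  | .inl i => ![.inl 1, .inl 2, .inl 1, .inl 2, .inl 5, .inl 6, .inl 5] i
  | .inr _ => .inl 1

def gC : ZMod 7 ⊕ Unit → ZMod 7 ⊕ Unit := fun p =>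
  match p with
  | .inl i => ![.inl 2, .inl 3, .inl 0, .inl 1, .inl 6, .inr (), .inl 4] i
  | .inr _ => .inl 0

lemma goodC7T : GoodColoring C7T := by
  refine ⟨cC, ?_, ?_⟩
  · have : ∀ u w, C7TAdj u w = true → cC u ≠ cC w := by decide
    exact this
  · intro v
    have key : ∀ v, C7TAdj v (fC v) = true ∧ C7TAdj (fC v) (gC v) = true ∧
        cC v ≠ cC (fC v) ∧ cC v ≠ cC (gC v) ∧ cC (fC v) ≠ cC (gC v) := by decide
    obtain ⟨k1, k2, k3, k4, k5⟩ := key v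
    exact startPath cC (fC v) (gC v) k1 k2 k3 k4 k5

lemma good_of_iso {W W' : Type} {H : SimpleGraph W} {H' : SimpleGraph W'}
    (e : H ≃g H') (h : GoodColoring H') : GoodColoring H := by
  obtain ⟨c', hp, hpath⟩ := h
  refine ⟨fun v => c' (e v), fun u w huw => hp _ _ (e.map_adj_iff.mpr huw), fun v => ?_⟩
  obtain ⟨z, p, hlen, hnd⟩ := hpath (e v)
  refine ⟨e.symm z, (p.map e.symm.toHom).copy (e.symm_apply_apply v) rfl, ?_, ?_⟩
  · simp [SimpleGraph.Walk.support_copy, SimpleGraph.Walk.support_map, hlen]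
  · rw [SimpleGraph.Walk.support_copy, SimpleGraph.Walk.support_map, List.map_map]
    have h2 : ((fun v => c' (e v)) ∘ e.symm.toHom) = c' := by
      funext w; simp
    rw [h2]; exact hnd


theorem min_counterexample_no_twins {V : Type} [Fintype V] (G : SimpleGraph V)
    (hG : G.Connected) (hχ : G.chromaticNumber = 3)
    (hC7 : ¬ Nonempty (G ≃g cycleG 7))
    (hbad : ¬ GoodColoring G)
    (hmin : ∀ (W : Type) [Fintype W] (H : SimpleGraph W),
        Fintype.card W < Fintype.card V → H.Connected →
        H.chromaticNumber = 3 → ¬ Nonempty (H ≃g cycleG 7) → GoodColoring H) :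
    ∀ x y : V, x ≠ y → G.neighborSet x ≠ G.neighborSet y := by
  classical
  intro x y hxy hN
  have htwin : ∀ v, G.Adj y v ↔ G.Adj x v := fun v => by
    rw [← SimpleGraph.mem_neighborSet, ← SimpleGraph.mem_neighborSet, ← hN]
  set G' := G.comap (Subtype.val : {v : V // v ≠ y} → V) with hG'def
  have hG'adj : ∀ (u v : {v : V // v ≠ y}), G'.Adj u v ↔ G.Adj u.1 v.1 := fun _ _ => Iff.rfl
  by_cases hiso : Nonempty (G' ≃g cycleG 7)
  · -- G' is C_7 : G ≅ C7T, which has a good coloring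
    obtain ⟨φ⟩ := hiso
    set a : ZMod 7 := φ ⟨x, hxy⟩ with ha
    have trans7 : ∀ (a i j : ZMod 7),
        (C7TAdj (.inl (i - a)) (.inl (j - a)) = true) ↔ (i ≠ j ∧ (i = j + 1 ∨ j = i + 1)) := by
      decide
    have nbr7 : ∀ (a b : ZMod 7),
        (C7TAdj (.inr ()) (.inl (b - a)) = true) ↔ (a ≠ b ∧ (a = b + 1 ∨ b = a + 1)) := by
      decide
    have nbr7' : ∀ (a b : ZMod 7),
        (C7TAdj (.inl (b - a)) (.inr ()) = true) ↔ (a ≠ b ∧ (a = b + 1 ∨ b = a + 1)) := by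
      decide
    have cyc : ∀ i j : ZMod 7, (cycleG 7).Adj i j ↔ (i ≠ j ∧ (i = j + 1 ∨ j = i + 1)) :=
      fun _ _ => Iff.rfl
    refine hbad (good_of_iso ?_ goodC7T)
    refine ⟨⟨fun v => if h : v = y then .inr () else .inl (φ ⟨v, h⟩ - a),
      fun p => match p with
        | .inl i => (φ.symm (i + a) : {v : V // v ≠ y}).1
        | .inr _ => y, ?_, ?_⟩, ?_⟩
    · intro v
      by_cases h : v = y
      · subst h; simp
      · simp only [dif_neg h]
        show ((φ.symm (φ ⟨v, h⟩ - a + a)) : {v : V // v ≠ y}).1 = v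
        rw [sub_add_cancel, RelIso.symm_apply_apply]
    · intro p
      rcases p with i | u
      · have hne := (φ.symm (i + a)).2
        simp only [dif_neg hne]
        show Sum.inl (φ (φ.symm (i + a)) - a) = Sum.inl i
        rw [RelIso.apply_symm_apply, add_sub_cancel_right]
      · cases u; simp
    · intro u v
      simp only [Equiv.coe_fn_mk]
      by_cases hu : u = y <;> by_cases hv : v = y
      · rw [dif_pos hu, dif_pos hv]
        constructor
        · intro h
          exact absurd (show C7TAdj (Sum.inr ()) (Sum.inr ()) = true from h) (by decide)
        · intro h
          rw [hu, hv] at h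
          exact absurd h (G.loopless.irrefl y)
      · rw [dif_pos hu, dif_neg hv, C7T_adj_iff, nbr7 a (φ ⟨v, hv⟩), ← cyc, ha,
          φ.map_adj_iff, hG'adj, ← htwin v, hu]
      · rw [dif_neg hu, dif_pos hv, C7T_adj_iff, nbr7' a (φ ⟨u, hu⟩), ← cyc, ha,
          φ.map_adj_iff, hG'adj, ← htwin u, G.adj_comm y u, hv]
      · rw [dif_neg hu, dif_neg hv, C7T_adj_iff, trans7 a (φ ⟨u, hu⟩) (φ ⟨v, hv⟩), ← cyc,
          φ.map_adj_iff, hG'adj]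
  · -- delete y, apply minimality, extend the coloring
    have rmap : ∀ {s t : V}, G.Adj s t →
        G.Adj (if s = y then x else s) (if t = y then x else t) := by
      intro s t h
      by_cases hs : s = y <;> by_cases ht : t = y
      · rw [hs, ht] at h; exact absurd h (G.loopless.irrefl y)
      · simp only [if_pos hs, if_neg ht]; rw [hs] at h; exact (htwin t).mp h
      · simp only [if_neg hs, if_pos ht]; rw [ht] at h; exact ((htwin s).mp h.symm).symm
      · simp only [if_neg hs, if_neg ht]; exact h
    have liftReach : ∀ {s t : V} (p : G.Walk s t), (∀ w ∈ p.support, w ≠ y) →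
        ∀ (hs : s ≠ y) (ht : t ≠ y), G'.Reachable ⟨s, hs⟩ ⟨t, ht⟩ := by
      intro s t p
      induction p with
      | nil => intro _ hs ht; exact SimpleGraph.Reachable.refl _
      | @cons s b t h q ih =>
        intro hp hs ht
        have hb : b ≠ y := hp b (by simp)
        exact (SimpleGraph.Adj.reachable
          (show G'.Adj ⟨s, hs⟩ ⟨b, hb⟩ from h)).trans
          (ih (fun w hw => hp w (by simp [hw])) hb ht)
    have hconn : G'.Connected := by
      rw [SimpleGraph.connected_iff]
      refine ⟨?_, ⟨⟨x, hxy⟩⟩⟩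
      rintro ⟨u, hu⟩ ⟨v, hv⟩
      obtain ⟨p⟩ := hG.preconnected u v
      let rhom : G →g G := ⟨fun v => if v = y then x else v, rmap⟩
      have e1 : rhom u = u := if_neg hu
      have e2 : rhom v = v := if_neg hv
      refine liftReach ((p.map rhom).copy e1 e2) ?_ hu hv
      intro w hw
      rw [SimpleGraph.Walk.support_copy, SimpleGraph.Walk.support_map] at hw
      obtain ⟨z, _, rfl⟩ := List.mem_map.mp hw
      show (if z = y then x else z) ≠ y
      by_cases hz : z = y
      · simpa [hz] using hxy
      · simpa [hz] using hz
    have hcol3 : G.Colorable 3 := by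
      rw [← SimpleGraph.chromaticNumber_le_iff_colorable, hχ]; norm_num
    have hcol3' : G'.Colorable 3 := by
      obtain ⟨C⟩ := hcol3
      exact ⟨SimpleGraph.Coloring.mk (fun v => C v.1) fun h => C.valid h⟩
    have hnot2 : ¬ G'.Colorable 2 := by
      rintro ⟨c2⟩
      have : G.Colorable 2 := by
        refine ⟨SimpleGraph.Coloring.mk
          (fun v => if h : v = y then c2 ⟨x, hxy⟩ else c2 ⟨v, h⟩) ?_⟩
        intro s t h
        by_cases hs : s = y <;> by_cases ht : t = y
        · rw [hs, ht] at h; exact absurd h (G.loopless.irrefl y)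
        · simp only [dif_pos hs, dif_neg ht]
          rw [hs] at h
          exact c2.valid (show G'.Adj ⟨x, hxy⟩ ⟨t, ht⟩ from (htwin t).mp h)
        · simp only [dif_neg hs, dif_pos ht]
          rw [ht] at h
          exact c2.valid (show G'.Adj ⟨s, hs⟩ ⟨x, hxy⟩ from ((htwin s).mp h.symm).symm)
        · simp only [dif_neg hs, dif_neg ht]
          exact c2.valid (show G'.Adj ⟨s, hs⟩ ⟨t, ht⟩ from h)
      have h2 := this.chromaticNumber_le
      rw [hχ] at h2
      norm_num at h2
    have hχ' : G'.chromaticNumber = 3 := by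
      refine le_antisymm ?_ ?_
      · have := hcol3'.chromaticNumber_le
        norm_num at this ⊢
        exact this
      · have h2lt : (2 : ℕ∞) < G'.chromaticNumber := by
          by_contra hle
          exact hnot2 (SimpleGraph.chromaticNumber_le_iff_colorable.mp
            (by exact_mod_cast not_lt.mp hle))
        calc (3 : ℕ∞) = 2 + 1 := by norm_num
          _ ≤ G'.chromaticNumber := Order.add_one_le_of_lt h2lt
    have hcard : Fintype.card {v : V // v ≠ y} < Fintype.card V :=
      Fintype.card_subtype_lt (x := y) (by simp)
    obtain ⟨c', hp', hpath'⟩ := hmin _ G' hcard hconn hχ' hiso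
    have extract : ∀ (u0 : {v : V // v ≠ y}), ∃ (b z : {v : V // v ≠ y}),
        G'.Adj u0 b ∧ G'.Adj b z ∧ c' u0 ≠ c' b ∧ c' u0 ≠ c' z ∧ c' b ≠ c' z := by
      intro u0
      obtain ⟨z, p, hlen, hnd⟩ := hpath' u0
      cases p with
      | nil => simp at hlen
      | cons h1 q =>
        rename_i b
        cases q with
        | nil => simp at hlen
        | cons h2 q2 =>
          rename_i b2
          cases q2 with
          | nil =>
            simp only [SimpleGraph.Walk.support_cons, SimpleGraph.Walk.support_nil,
              List.map_cons, List.map_nil, List.nodup_cons, List.mem_cons,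
              List.mem_singleton, List.not_mem_nil, not_or, List.nodup_nil] at hnd
            refine ⟨b, z, h1, h2, ?_, ?_, ?_⟩ <;> tauto
          | cons h3 q3 =>
            simp [SimpleGraph.Walk.length_support] at hlen
    set c : V → Fin 3 := fun v => if h : v = y then c' ⟨x, hxy⟩ else c' ⟨v, h⟩ with hc
    have hcc : ∀ (w : {v : V // v ≠ y}), c w.1 = c' w := by
      rintro ⟨w, hw⟩; simp only [hc]; rw [dif_neg hw]
    have hcy : c y = c' ⟨x, hxy⟩ := by simp [hc]
    apply hbad
    refine ⟨c, ?_, ?_⟩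
    · intro s t h
      by_cases hs : s = y <;> by_cases ht : t = y
      · rw [hs, ht] at h; exact absurd h (G.loopless.irrefl y)
      · rw [hs] at h ⊢
        rw [hcy]
        simp only [hc]
        rw [dif_neg ht]
        exact hp' _ _ (show G'.Adj ⟨x, hxy⟩ ⟨t, ht⟩ from (htwin t).mp h)
      · rw [ht] at h ⊢
        rw [hcy]
        simp only [hc]
        rw [dif_neg hs]
        exact hp' _ _ (show G'.Adj ⟨s, hs⟩ ⟨x, hxy⟩ from ((htwin s).mp h.symm).symm)
      · simp only [hc]
        rw [dif_neg hs, dif_neg ht]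
        exact hp' _ _ (show G'.Adj ⟨s, hs⟩ ⟨t, ht⟩ from h)
    · intro v
      by_cases hv : v = y
      · obtain ⟨b, z, a1, a2, n1, n2, n3⟩ := extract ⟨x, hxy⟩
        rw [hv]
        refine startPath c b.1 z.1 ((htwin b.1).mpr a1) a2 ?_ ?_ ?_
        · rw [hcy, hcc]; exact n1
        · rw [hcy, hcc]; exact n2
        · rw [hcc, hcc]; exact n3
      · obtain ⟨b, z, a1, a2, n1, n2, n3⟩ := extract ⟨v, hv⟩
        have hcv : c v = c' ⟨v, hv⟩ := by simp only [hc]; rw [dif_neg hv]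
        refine startPath c b.1 z.1 a1 a2 ?_ ?_ ?_
        · rw [hcv, hcc]; exact n1
        · rw [hcv, hcc]; exact n2
        · rw [hcc, hcc]; exact n3
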